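/- arXiv:2002.10678 — 8 statements merged into one kernel-verified Lean document; each statement's English description precedes it below -/
import Mathlib

section
/- For any convex lower semi-continuous function f : [0,∞) → ℝ with f(1) = 0, any probability measures P, Q on a measurable space with Q absolutely continuous with respect to P, and any bounded measurable function φ, the expectation of φ under Q is at most the f-divergence D_f(Q‖P) = E_P[f(dQ/dP)] plus E_P[f*(φ)], where f* is the convex conjugate of f. -/
open MeasureTheory

theorem change_of_measure_unconstrained_f_divergence
    {Ω : Type*} [MeasurableSpace Ω] (P Q : Measure Ω)
    [IsProbabilityMeasure P] [IsProbabilityMeasure Q] (hQP : Q ≪ P)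
    (f fstar : ℝ → ℝ)
    (hconv : ConvexOn ℝ (Set.Ici 0) f)
    (hlsc : LowerSemicontinuousOn f (Set.Ici 0))
    (hf1 : f 1 = 0)
    (hfstar : ∀ y : ℝ, IsLUB {z : ℝ | ∃ x ≥ (0:ℝ), z = x * y - f x} (fstar y))
    (φ : Ω → ℝ) (hφ : Measurable φ) (hbdd : ∃ C, ∀ x, |φ x| ≤ C)
    (hint1 : Integrable (fun x => f (Q.rnDeriv P x).toReal) P)
    (hint2 : Integrable (fun x => fstar (φ x)) P) :
    ∫ x, φ x ∂Q ≤ ∫ x, f (Q.rnDeriv P x).toReal ∂P + ∫ x, fstar (φ x) ∂P := by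
  obtain ⟨C, hC⟩ := hbdd
  have key : ∫ x, (Q.rnDeriv P x).toReal • φ x ∂P = ∫ x, φ x ∂Q :=
    integral_rnDeriv_smul hQP
  rw [← key, ← integral_add hint1 hint2]
  have hintL : Integrable (fun x => (Q.rnDeriv P x).toReal • φ x) P := by
    simp_rw [smul_eq_mul, mul_comm]
    exact (Measure.integrable_toReal_rnDeriv).bdd_mul hφ.aestronglyMeasurable
      (c := C) (ae_of_all _ fun x => by simpa [Real.norm_eq_abs] using hC x)
  refine integral_mono hintL (hint1.add hint2) fun x => ?_
  have hr : (0:ℝ) ≤ (Q.rnDeriv P x).toReal := ENNReal.toReal_nonneg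
  have := (hfstar (φ x)).1 ⟨(Q.rnDeriv P x).toReal, hr, rfl⟩
  simp only [smul_eq_mul]
  linarith
end

section
/- For α > 1, probability measures P, Q with Q ≪ P, and any nonnegative bounded measurable function φ, E_Q[φ] ≤ D_α(Q‖P) + ((α−1)^{α/(α−1)}/α)·E_P[φ^{α/(α−1)}] + 1/(α(α−1)), where D_α(Q‖P) = (1/(α(α−1)))·E_P[(dQ/dP)^α − 1]. -/
open MeasureTheory ENNReal

lemma young_weighted {α : ℝ} (hα : 1 < α) {t y : ℝ} (ht : 0 ≤ t) (hy : 0 ≤ y) :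
    t * y ≤ (1 / (α * (α - 1))) * t ^ α
      + ((α - 1) ^ (α / (α - 1)) / α) * y ^ (α / (α - 1)) := by
  have hα1 : (0:ℝ) < α - 1 := by linarith
  have hα0 : (0:ℝ) < α := by linarith
  set q : ℝ := α / (α - 1) with hq
  have hq0 : 0 < q := by positivity
  have hpq : α.HolderConjugate q := Real.HolderConjugate.conjExponent hα
  set u : ℝ := (α - 1) ^ (-(α⁻¹)) with hu
  have hu0 : 0 < u := Real.rpow_pos_of_pos hα1 _
  have huα : u ^ α = (α - 1)⁻¹ := by
    rw [hu, ← Real.rpow_mul hα1.le]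
    rw [show -(α⁻¹) * α = -1 by field_simp]
    exact Real.rpow_neg_one _
  have huq : u ^ q = ((α - 1) ^ ((α-1)⁻¹))⁻¹ := by
    rw [hu, ← Real.rpow_mul hα1.le, show -(α⁻¹) * q = -((α-1)⁻¹) by
      rw [hq]; field_simp, Real.rpow_neg hα1.le]
  have hA : (α - 1) ^ q = (α - 1) ^ ((α-1)⁻¹) * (α - 1) := by
    rw [show q = (α-1)⁻¹ + 1 by rw [hq]; field_simp; ring, Real.rpow_add hα1, Real.rpow_one]
  have hA0 : (0:ℝ) < (α - 1) ^ ((α-1)⁻¹) := Real.rpow_pos_of_pos hα1 _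
  calc t * y = (t * u) * (y / u) := by field_simp
    _ ≤ (t * u) ^ α / α + (y / u) ^ q / q :=
        Real.young_inequality_of_nonneg (by positivity) (by positivity) hpq
    _ = (1 / (α * (α - 1))) * t ^ α + ((α - 1) ^ q / α) * y ^ q := by
        rw [Real.mul_rpow ht hu0.le, huα, Real.div_rpow hy hu0.le, huq, hA]
        rw [hq]
        field_simp

theorem change_of_measure_unconstrained_alpha_divergence
    {Ω : Type*} [MeasurableSpace Ω] (P Q : Measure Ω)
    [IsProbabilityMeasure P] [IsProbabilityMeasure Q] (hQP : Q ≪ P)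
    (α : ℝ) (hα : 1 < α)
    (φ : Ω → ℝ) (hφ : Measurable φ) (h0 : ∀ x, 0 ≤ φ x) (hbdd : ∃ C, ∀ x, |φ x| ≤ C) :
    ENNReal.ofReal (∫ x, φ x ∂Q -
        (((α - 1) ^ (α / (α - 1)) / α) * ∫ x, (φ x) ^ (α / (α - 1)) ∂P + 1 / (α * (α - 1)))) ≤
      ENNReal.ofReal (1 / (α * (α - 1))) * ((∫⁻ x, (Q.rnDeriv P x) ^ α ∂P) - 1) := by
  have hα1 : (0:ℝ) < α - 1 := by linarith
  have hα0 : (0:ℝ) < α := by linarith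
  set q : ℝ := α / (α - 1) with hq
  have hq0 : 0 < q := by positivity
  set k : ℝ := 1 / (α * (α - 1)) with hk
  have hk0 : 0 < k := by positivity
  set c : ℝ := (α - 1) ^ q / α with hc
  set L : ENNReal := ∫⁻ x, (Q.rnDeriv P x) ^ α ∂P with hL
  by_cases hLtop : L = ∞
  · rw [hLtop, ENNReal.top_sub (by norm_num), ENNReal.mul_top (by
      simp [ENNReal.ofReal_eq_zero, not_le, hk0])]
    exact le_top
  -- finite case
  obtain ⟨C, hC⟩ := hbdd
  have hrm : Measurable (Q.rnDeriv P) := Measure.measurable_rnDeriv Q P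
  have hrlt : ∀ᵐ x ∂P, Q.rnDeriv P x < ∞ := Measure.rnDeriv_lt_top Q P
  set g : Ω → ℝ := fun x => (Q.rnDeriv P x).toReal with hg
  have hgm : Measurable g := hrm.ennreal_toReal
  have hg0 : ∀ x, 0 ≤ g x := fun x => ENNReal.toReal_nonneg
  -- integrability of g^α
  have hIgα : Integrable (fun x => g x ^ α) P := by
    have h := integrable_toReal_of_lintegral_ne_top
      ((hrm.pow_const _).aemeasurable (μ := P)) hLtop
    refine h.congr (Filter.Eventually.of_forall fun x => ?_)
    exact (ENNReal.toReal_rpow _ _).symm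
  -- integrability of φ^q w.r.t. P
  have hφle : ∀ x, φ x ≤ max C 0 := fun x => le_trans (le_abs_self _) (le_max_of_le_left (hC x))
  have hIφq : Integrable (fun x => φ x ^ q) P := by
    refine Integrable.mono' (integrable_const ((max C 0) ^ q))
      (((Real.continuous_rpow_const hq0.le).measurable.comp hφ).aestronglyMeasurable) (Filter.Eventually.of_forall fun x => ?_)
    rw [Real.norm_of_nonneg (Real.rpow_nonneg (h0 x) _)]
    exact Real.rpow_le_rpow (h0 x) (hφle x) hq0.le
  -- change of measure
  have hchg : ∫ x, φ x ∂Q = ∫ x, g x * φ x ∂P := by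
    rw [← MeasureTheory.integral_rnDeriv_smul hQP]
    simp [hg, smul_eq_mul]
  -- pointwise bound and integral inequality
  have hRHSint : Integrable (fun x => k * g x ^ α + c * φ x ^ q) P :=
    (hIgα.const_mul k).add (hIφq.const_mul c)
  have hmono : ∫ x, g x * φ x ∂P ≤ ∫ x, (k * g x ^ α + c * φ x ^ q) ∂P := by
    refine integral_mono_of_nonneg (Filter.Eventually.of_forall fun x =>
      mul_nonneg (hg0 x) (h0 x)) hRHSint (Filter.Eventually.of_forall fun x => ?_)
    exact young_weighted hα (hg0 x) (h0 x)
  have hgint : ∫ x, g x ^ α ∂P = L.toReal := by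
    rw [hL, ← integral_toReal ((hrm.pow_const _).aemeasurable) ?_]
    · exact integral_congr_ae (Filter.Eventually.of_forall fun x =>
        (ENNReal.toReal_rpow _ _))
    · filter_upwards [hrlt] with x hx
      exact ENNReal.rpow_lt_top_of_nonneg hα0.le hx.ne
  have hsum : ∫ x, (k * g x ^ α + c * φ x ^ q) ∂P
      = k * L.toReal + c * ∫ x, φ x ^ q ∂P := by
    rw [integral_add (hIgα.const_mul k) (hIφq.const_mul c), integral_const_mul,
      integral_const_mul, hgint]
  have hmain : ∫ x, φ x ∂Q - (c * ∫ x, (φ x) ^ q ∂P + k) ≤ k * (L.toReal - 1) := by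
    rw [hchg]
    have := hmono.trans_eq hsum
    linarith [this]
  calc ENNReal.ofReal (∫ x, φ x ∂Q - (c * ∫ x, (φ x) ^ q ∂P + k))
      ≤ ENNReal.ofReal (k * (L.toReal - 1)) := ENNReal.ofReal_le_ofReal hmain
    _ = ENNReal.ofReal k * ENNReal.ofReal (L.toReal - 1) := ENNReal.ofReal_mul hk0.le
    _ = ENNReal.ofReal k * (ENNReal.ofReal L.toReal - ENNReal.ofReal 1) := by
        rw [ENNReal.ofReal_sub _ zero_le_one]
    _ = ENNReal.ofReal k * (L - 1) := by
        rw [ENNReal.ofReal_toReal hLtop, ENNReal.ofReal_one]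
end

section
/- For probability measures P, Q with Q ≪ P and any measurable function φ taking values in (−∞, 1) that is bounded, E_Q[φ] ≤ H²(Q‖P) + E_P[φ/(1−φ)], where H²(Q‖P) = E_P[(√(dQ/dP) − 1)²] is the squared Hellinger distance. -/
open MeasureTheory

lemma key_pointwise (a t : ℝ) (ha : a < 1) :
    a * t ^ 2 ≤ (t - 1) ^ 2 + a / (1 - a) := by
  have h : 0 < 1 - a := by linarith
  have h2 : a / (1 - a) * (1 - a) = a := div_mul_cancel₀ _ h.ne'
  nlinarith [sq_nonneg ((1 - a) * t - 1), h2, h]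

theorem change_of_measure_squared_hellinger
    {Ω : Type*} [MeasurableSpace Ω] (P Q : Measure Ω)
    [IsProbabilityMeasure P] [IsProbabilityMeasure Q] (hQP : Q ≪ P)
    (φ : Ω → ℝ) (hφ : Measurable φ) (hlt : ∀ x, φ x < 1) (hbdd : ∃ C, ∀ x, |φ x| ≤ C)
    (hint : Integrable (fun x => φ x / (1 - φ x)) P) :
    ∫ x, φ x ∂Q ≤
      ∫ x, (Real.sqrt (Q.rnDeriv P x).toReal - 1) ^ 2 ∂P + ∫ x, φ x / (1 - φ x) ∂P := by
  obtain ⟨C, hC⟩ := hbdd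
  set g : Ω → ℝ := fun x => (Q.rnDeriv P x).toReal with hgdef
  have hg : Measurable g := (Q.measurable_rnDeriv P).ennreal_toReal
  have hgnn : ∀ x, 0 ≤ g x := fun x => ENNReal.toReal_nonneg
  have hgint : Integrable g P := Measure.integrable_toReal_rnDeriv
  have hC' : ∀ x, |φ x| ≤ |C| := fun x => (hC x).trans (le_abs_self C)
  have hφQ : Integrable φ Q := by
    refine ⟨hφ.aestronglyMeasurable, ?_⟩
    exact HasFiniteIntegral.of_bounded (C := |C|) (Filter.Eventually.of_forall fun x => by
      simpa [Real.norm_eq_abs] using hC' x)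
  have heq : ∫ x, φ x ∂Q = ∫ x, g x * φ x ∂P := by
    rw [← integral_rnDeriv_smul hQP (f := φ)]
    simp [hgdef, smul_eq_mul]
  have hA : Integrable (fun x => (Real.sqrt (g x) - 1) ^ 2) P := by
    refine Integrable.mono (hgint.add (integrable_const 1)) ?_ ?_
    · exact ((hg.sqrt.sub measurable_const).pow_const 2).aestronglyMeasurable
    · refine Filter.Eventually.of_forall fun x => ?_
      have hs : 0 ≤ Real.sqrt (g x) := Real.sqrt_nonneg _
      have hsq : Real.sqrt (g x) ^ 2 = g x := Real.sq_sqrt (hgnn x)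
      simp only [Pi.add_apply, Real.norm_eq_abs]
      rw [abs_of_nonneg (sq_nonneg _),
        abs_of_nonneg (by linarith [hgnn x] : (0:ℝ) ≤ g x + 1)]
      nlinarith
  have hL : Integrable (fun x => g x * φ x) P := by
    refine Integrable.mono (hgint.const_mul |C|)
      (hg.mul hφ).aestronglyMeasurable ?_
    refine Filter.Eventually.of_forall fun x => ?_
    rw [Real.norm_eq_abs, Real.norm_eq_abs, abs_mul, abs_of_nonneg (hgnn x),
      abs_mul, abs_abs, abs_of_nonneg (hgnn x)]
    calc g x * |φ x| ≤ g x * |C| := mul_le_mul_of_nonneg_left (hC' x) (hgnn x)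
      _ = |C| * g x := mul_comm _ _
  have hpt : ∀ x, g x * φ x ≤ (Real.sqrt (g x) - 1) ^ 2 + φ x / (1 - φ x) := by
    intro x
    have hsq : Real.sqrt (g x) ^ 2 = g x := Real.sq_sqrt (hgnn x)
    have := key_pointwise (φ x) (Real.sqrt (g x)) (hlt x)
    rw [hsq] at this
    linarith [this]
  calc ∫ x, φ x ∂Q = ∫ x, g x * φ x ∂P := heq
    _ ≤ ∫ x, ((Real.sqrt (g x) - 1) ^ 2 + φ x / (1 - φ x)) ∂P :=
        integral_mono hL (hA.add hint) hpt
    _ = ∫ x, (Real.sqrt (g x) - 1) ^ 2 ∂P + ∫ x, φ x / (1 - φ x) ∂P :=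
        integral_add hA hint
end

section
/- For probability measures P, Q with Q ≪ P, P ≪ Q, and any bounded measurable function φ with φ < 1 pointwise, E_Q[φ] ≤ KL(P‖Q) + E_P[log(1/(1−φ))], where KL(P‖Q) = E_P[log(dP/dQ)] is the reverse KL-divergence of Q from P. -/
open MeasureTheory

lemma pointwise_cor_bound (a b : ℝ) (ha : 0 ≤ a) (hb : b < 1) :
    b ≤ a * (Real.log a + Real.log (1 / (1 - b))) - a + 1 := by
  have h1b : 0 < 1 - b := by linarith
  rcases ha.eq_or_lt with h | h
  · simp [← h]; linarith
  · rw [one_div, Real.log_inv]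
    have hlog := Real.log_le_sub_one_of_pos (div_pos h1b h)
    rw [Real.log_div h1b.ne' h.ne'] at hlog
    have hmul : a * (Real.log (1 - b) - Real.log a) ≤ (1 - b) - a := by
      have := mul_le_mul_of_nonneg_left hlog h.le
      calc a * (Real.log (1 - b) - Real.log a) ≤ a * ((1 - b) / a - 1) := this
        _ = (1 - b) - a := by field_simp
    nlinarith

theorem change_of_measure_reverse_kl
    {Ω : Type*} [MeasurableSpace Ω] (P Q : Measure Ω)
    [IsProbabilityMeasure P] [IsProbabilityMeasure Q] (hQP : Q ≪ P) (hPQ : P ≪ Q)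
    (φ : Ω → ℝ) (hφ : Measurable φ) (hlt : ∀ x, φ x < 1) (hbdd : ∃ C, ∀ x, |φ x| ≤ C)
    (hKL : Integrable (fun x => Real.log (P.rnDeriv Q x).toReal) P)
    (hint : Integrable (fun x => Real.log (1 / (1 - φ x))) P) :
    ∫ x, φ x ∂Q ≤
      ∫ x, Real.log (P.rnDeriv Q x).toReal ∂P + ∫ x, Real.log (1 / (1 - φ x)) ∂P := by
  set f : Ω → ℝ := fun x => (P.rnDeriv Q x).toReal with hf
  -- integrability of φ wrt Q
  obtain ⟨C, hC⟩ := hbdd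
  have hφint : Integrable φ Q :=
    Integrable.mono' (integrable_const C) hφ.aestronglyMeasurable
      (Filter.Eventually.of_forall fun x => by rw [Real.norm_eq_abs]; exact hC x)
  -- integrability and value of g = f * (log f + log (1/(1-φ)))
  have hg_int : Integrable (fun x => f x * (Real.log (f x) + Real.log (1 / (1 - φ x)))) Q := by
    have := (MeasureTheory.integrable_rnDeriv_smul_iff (f := fun x =>
      Real.log (f x) + Real.log (1 / (1 - φ x))) hPQ).mpr (hKL.add hint)
    simpa [smul_eq_mul] using this
  have hg_eq : ∫ x, f x * (Real.log (f x) + Real.log (1 / (1 - φ x))) ∂Q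
      = ∫ x, Real.log (f x) ∂P + ∫ x, Real.log (1 / (1 - φ x)) ∂P := by
    have := MeasureTheory.integral_rnDeriv_smul (f := fun x =>
      Real.log (f x) + Real.log (1 / (1 - φ x))) hPQ
    simp only [smul_eq_mul] at this
    rw [this, integral_add hKL hint]
  have hf_int : Integrable f Q := Measure.integrable_toReal_rnDeriv
  have hf_eq : ∫ x, f x ∂Q = 1 := by
    rw [hf, Measure.integral_toReal_rnDeriv hPQ]; simp
  have hmono : ∫ x, φ x ∂Q ≤
      ∫ x, (f x * (Real.log (f x) + Real.log (1 / (1 - φ x))) - f x + 1) ∂Q := by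
    refine integral_mono hφint (((hg_int.sub hf_int).add (integrable_const 1))) fun x => ?_
    exact pointwise_cor_bound (f x) (φ x) ENNReal.toReal_nonneg (hlt x)
  calc ∫ x, φ x ∂Q
      ≤ ∫ x, (f x * (Real.log (f x) + Real.log (1 / (1 - φ x))) - f x + 1) ∂Q := hmono
    _ = ∫ x, f x * (Real.log (f x) + Real.log (1 / (1 - φ x))) ∂Q - ∫ x, f x ∂Q + 1 := by
        have hsub : Integrable (fun x => f x * (Real.log (f x) + Real.log (1 / (1 - φ x))) - f x) Q :=
          hg_int.sub hf_int
        rw [integral_add hsub (integrable_const 1), integral_sub hg_int hf_int, integral_const]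
        simp
    _ = ∫ x, Real.log (f x) ∂P + ∫ x, Real.log (1 / (1 - φ x)) ∂P := by
        rw [hg_eq, hf_eq]; ring
end

section
/- For probability measures P, Q with Q ≪ P, P ≪ Q, and any bounded measurable function φ with φ < 1 pointwise, E_Q[φ] ≤ χ̄²(Q‖P) + 2 − 2·E_P[√(1−φ)], where χ̄²(Q‖P) = E_Q[(dP/dQ − 1)²] is the Neyman chi-squared divergence. -/
open MeasureTheory

theorem change_of_measure_neyman_chi_sq
    {Ω : Type*} [MeasurableSpace Ω] (P Q : Measure Ω)
    [IsProbabilityMeasure P] [IsProbabilityMeasure Q] (hQP : Q ≪ P) (hPQ : P ≪ Q)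
    (φ : Ω → ℝ) (hφ : Measurable φ) (hlt : ∀ x, φ x < 1) (hbdd : ∃ C, ∀ x, |φ x| ≤ C) :
    ENNReal.ofReal (∫ x, φ x ∂Q - (2 - 2 * ∫ x, Real.sqrt (1 - φ x) ∂P)) ≤
      ∫⁻ x, ENNReal.ofReal (((P.rnDeriv Q x).toReal - 1) ^ 2) ∂Q := by
  set r : Ω → ℝ := fun x => (P.rnDeriv Q x).toReal with hr
  set g : Ω → ℝ := fun x => (r x - 1) ^ 2 with hg
  by_cases htop : ∫⁻ x, ENNReal.ofReal (g x) ∂Q = ⊤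
  · rw [htop]; exact le_top
  -- r is measurable, nonneg, integrable
  have hrmeas : Measurable r := (Measure.measurable_rnDeriv P Q).ennreal_toReal
  have hrint : Integrable r Q := Measure.integrable_toReal_rnDeriv
  have hrnn : ∀ x, 0 ≤ r x := fun x => ENNReal.toReal_nonneg
  have hgmeas : Measurable g := by fun_prop
  have hgnn : ∀ x, 0 ≤ g x := fun x => sq_nonneg _
  have hgint : Integrable g Q := by
    refine ⟨hgmeas.aestronglyMeasurable, ?_⟩
    rw [hasFiniteIntegral_iff_ofReal (Filter.Eventually.of_forall hgnn)]
    exact lt_top_iff_ne_top.mpr htop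
  obtain ⟨C, hC⟩ := hbdd
  -- a := sqrt (1 - φ)
  set a : Ω → ℝ := fun x => Real.sqrt (1 - φ x) with ha
  have hameas : Measurable a := by fun_prop
  have habd : ∀ x, |a x| ≤ Real.sqrt (1 + C) := by
    intro x
    rw [abs_of_nonneg (Real.sqrt_nonneg _)]
    apply Real.sqrt_le_sqrt
    have := (abs_le.mp (hC x)).1
    linarith
  -- integrability facts
  have hφint : Integrable φ Q :=
    ⟨hφ.aestronglyMeasurable, HasFiniteIntegral.of_bounded (C := C) (Filter.Eventually.of_forall fun x => by simpa using hC x)⟩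
  have haP : Integrable a P :=
    ⟨hameas.aestronglyMeasurable, HasFiniteIntegral.of_bounded (C := Real.sqrt (1 + C)) (Filter.Eventually.of_forall fun x => by simpa using habd x)⟩
  have harint : Integrable (fun x => r x * a x) Q := by
    have := hrint.bdd_mul (c := Real.sqrt (1 + C)) hameas.aestronglyMeasurable
      (Filter.Eventually.of_forall fun x => by simpa using habd x)
    simpa [mul_comm] using this
  -- change of measure
  have hchange : ∫ x, a x ∂P = ∫ x, r x * a x ∂Q := by
    rw [← integral_rnDeriv_smul hPQ]
    simp [hr, smul_eq_mul]
  have hint_r : ∫ x, r x ∂Q = 1 := by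
    rw [hr, Measure.integral_toReal_rnDeriv hPQ]
    simp
  -- pointwise inequality: φ + 2 r a - 2 r ≤ (r - 1)^2
  have hpt : ∀ x, φ x + 2 * (r x * a x) - 2 * r x ≤ g x := by
    intro x
    have h1 : a x ^ 2 = 1 - φ x := Real.sq_sqrt (by linarith [hlt x])
    show φ x + 2 * (r x * a x) - 2 * r x ≤ (r x - 1) ^ 2
    nlinarith [sq_nonneg (r x - a x)]
  -- integrate
  have hmain : ∫ x, φ x ∂Q - (2 - 2 * ∫ x, a x ∂P) ≤ ∫ x, g x ∂Q := by
    have hi1 : Integrable (fun x => φ x + 2 * (r x * a x)) Q :=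
      hφint.add (harint.const_mul 2)
    have hi2 : Integrable (fun x => 2 * r x) Q := hrint.const_mul 2
    have hint : ∫ x, (φ x + 2 * (r x * a x) - 2 * r x) ∂Q ≤ ∫ x, g x ∂Q :=
      integral_mono (hi1.sub hi2) hgint hpt
    have hsplit : ∫ x, (φ x + 2 * (r x * a x) - 2 * r x) ∂Q
        = (∫ x, φ x ∂Q) + 2 * (∫ x, r x * a x ∂Q) - 2 * ∫ x, r x ∂Q := by
      rw [integral_sub hi1 hi2, integral_add hφint (harint.const_mul 2),
        integral_const_mul, integral_const_mul]
    rw [hchange]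
    rw [hsplit, hint_r] at hint
    linarith
  calc ENNReal.ofReal (∫ x, φ x ∂Q - (2 - 2 * ∫ x, a x ∂P))
      ≤ ENNReal.ofReal (∫ x, g x ∂Q) := ENNReal.ofReal_le_ofReal hmain
    _ = ∫⁻ x, ENNReal.ofReal (g x) ∂Q :=
        ofReal_integral_eq_lintegral_ofReal hgint (Filter.Eventually.of_forall hgnn)
end

section
/- For α > 1, probability measures P, Q with Q ≪ P, and any measurable function φ with E_P[|φ|^{α/(α−1)}] < ∞, one has E_Q[φ] ≤ (α(α−1)·D_α(Q‖P) + 1)^{1/α} · (E_P[|φ|^{α/(α−1)}])^{(α−1)/α}, where D_α(Q‖P) = (1/(α(α−1)))·E_P[(dQ/dP)^α − 1]. -/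
open MeasureTheory

theorem multiplicative_change_of_measure_alpha
    {Ω : Type*} [MeasurableSpace Ω] (P Q : Measure Ω)
    [IsProbabilityMeasure P] [IsProbabilityMeasure Q] (hQP : Q ≪ P)
    (α : ℝ) (hα : 1 < α)
    (φ : Ω → ℝ) (hφ : Measurable φ) (hφQ : Integrable φ Q)
    (hmom : Integrable (fun x => |φ x| ^ (α / (α - 1))) P)
    (hd : Integrable (fun x => ((Q.rnDeriv P x).toReal) ^ α) P) :
    ∫ x, φ x ∂Q ≤
      (α * (α - 1) * ((1 / (α * (α - 1))) * ∫ x, (((Q.rnDeriv P x).toReal) ^ α - 1) ∂P) + 1)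
          ^ (1 / α) *
        (∫ x, |φ x| ^ (α / (α - 1)) ∂P) ^ ((α - 1) / α) := by
  set f : Ω → ℝ := fun x => (Q.rnDeriv P x).toReal with hf
  have hα0 : (0 : ℝ) < α := by linarith
  have hα1 : (0 : ℝ) < α - 1 := by linarith
  have hne : α * (α - 1) ≠ 0 := by positivity
  have hfnn : ∀ x, 0 ≤ f x := fun x => ENNReal.toReal_nonneg
  -- Simplify the first base
  have hbase : α * (α - 1) * ((1 / (α * (α - 1))) * ∫ x, (f x ^ α - 1) ∂P) + 1
      = ∫ x, f x ^ α ∂P := by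
    rw [integral_sub hd (integrable_const 1), integral_const]
    simp [measure_univ]
    field_simp
    ring
  rw [hbase]
  -- conjugate exponents
  have hpq : α.HolderConjugate (α / (α - 1)) := by
    rw [Real.holderConjugate_iff]
    constructor
    · exact hα
    · field_simp; ring
  -- Memℒp conditions
  have hfm : Measurable f := (Measure.measurable_rnDeriv Q P).ennreal_toReal
  have hf_mem : MemLp f (ENNReal.ofReal α) P := by
    have h1 : MemLp (fun x => ‖f x‖ ^ (ENNReal.ofReal α).toReal) 1 P := by
      rw [memLp_one_iff_integrable]
      have : (fun x => ‖f x‖ ^ (ENNReal.ofReal α).toReal) = fun x => f x ^ α := by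
        ext x
        rw [Real.norm_of_nonneg (hfnn x), ENNReal.toReal_ofReal hα0.le]
      rw [this]; exact hd
    have := (memLp_norm_rpow_iff (μ := P) (q := ENNReal.ofReal α) (p := ENNReal.ofReal α)
      hfm.aestronglyMeasurable (by simp [hα0]) (by simp)).mp ?_
    · exact this
    · rwa [ENNReal.div_self (by simp [hα0]) (by simp)]
  have hq0 : (0 : ℝ) < α / (α - 1) := by positivity
  have hφ_mem : MemLp (fun x => |φ x|) (ENNReal.ofReal (α / (α - 1))) P := by
    have h1 : MemLp (fun x => ‖|φ x|‖ ^ (ENNReal.ofReal (α / (α - 1))).toReal) 1 P := by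
      rw [memLp_one_iff_integrable]
      have : (fun x => ‖|φ x|‖ ^ (ENNReal.ofReal (α / (α - 1))).toReal)
          = fun x => |φ x| ^ (α / (α - 1)) := by
        ext x
        rw [Real.norm_of_nonneg (abs_nonneg _), ENNReal.toReal_ofReal hq0.le]
      rw [this]; exact hmom
    have := (memLp_norm_rpow_iff (μ := P) (q := ENNReal.ofReal (α / (α - 1)))
      (p := ENNReal.ofReal (α / (α - 1)))
      hφ.abs.aestronglyMeasurable (by simp [hq0]) (by simp)).mp ?_
    · exact this
    · rwa [ENNReal.div_self (by simp [hq0]) (by simp)]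
  -- Hölder
  have holder := integral_mul_le_Lp_mul_Lq_of_nonneg (μ := P) hpq
    (Filter.Eventually.of_forall hfnn)
    (Filter.Eventually.of_forall fun x => abs_nonneg (φ x))
    hf_mem hφ_mem
  -- change of measure
  have hcom : ∫ x, f x * |φ x| ∂P = ∫ x, |φ x| ∂Q := by
    have := integral_rnDeriv_smul (f := fun x => |φ x|) hQP
    simpa [smul_eq_mul] using this
  have h1 : ∫ x, φ x ∂Q ≤ ∫ x, |φ x| ∂Q := by
    calc ∫ x, φ x ∂Q ≤ |∫ x, φ x ∂Q| := le_abs_self _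
    _ ≤ ∫ x, |φ x| ∂Q := by
        simpa [Real.norm_eq_abs] using norm_integral_le_integral_norm (μ := Q) φ
  calc ∫ x, φ x ∂Q ≤ ∫ x, |φ x| ∂Q := h1
    _ = ∫ x, f x * |φ x| ∂P := hcom.symm
    _ ≤ (∫ x, f x ^ α ∂P) ^ (1 / α) * (∫ x, |φ x| ^ (α / (α - 1)) ∂P) ^ (1 / (α / (α - 1))) :=
        holder
    _ = _ := by rw [one_div_div]
end

section
/- Generalized Hammersley–Chapman–Robbins: for α > 1, probability measures P, Q with Q ≪ P, and any measurable function φ with E_P[|φ − μ_P|^{α/(α−1)}] < ∞ where μ_P = E_P[φ], one has |E_Q[φ] − E_P[φ]| ≤ (D̃_α(Q‖P))^{1/α} · (E_P[|φ − μ_P|^{α/(α−1)}])^{(α−1)/α}, where D̃_α(Q‖P) = E_P[|dQ/dP − 1|^α] is the pseudo α-divergence. -/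
open MeasureTheory

lemma memLp_of_integrable_abs_rpow {Ω : Type*} [MeasurableSpace Ω] {P : Measure Ω}
    {h : Ω → ℝ} (hm : AEStronglyMeasurable h P) {p : ℝ} (hp : 0 < p)
    (hint : Integrable (fun x => |h x| ^ p) P) : MemLp h (ENNReal.ofReal p) P := by
  have hq0 : (ENNReal.ofReal p) ≠ 0 := by simp [ENNReal.ofReal_eq_zero, not_le, hp]
  have hqt : (ENNReal.ofReal p) ≠ ⊤ := ENNReal.ofReal_ne_top
  refine (memLp_norm_rpow_iff (p := ENNReal.ofReal p) hm hq0 hqt).mp ?_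
  simp only [ENNReal.toReal_ofReal hp.le, ENNReal.div_self hq0 hqt]
  exact memLp_one_iff_integrable.mpr (by simpa [Real.norm_eq_abs] using hint)

theorem generalized_hcr
    {Ω : Type*} [MeasurableSpace Ω] (P Q : Measure Ω)
    [IsProbabilityMeasure P] [IsProbabilityMeasure Q] (hQP : Q ≪ P)
    (α : ℝ) (hα : 1 < α)
    (φ : Ω → ℝ) (hφ : Measurable φ) (hφP : Integrable φ P) (hφQ : Integrable φ Q)
    (hmom : Integrable (fun x => |φ x - ∫ y, φ y ∂P| ^ (α / (α - 1))) P)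
    (hdiv : Integrable (fun x => |(Q.rnDeriv P x).toReal - 1| ^ α) P) :
    |∫ x, φ x ∂Q - ∫ x, φ x ∂P| ≤
      (∫ x, |(Q.rnDeriv P x).toReal - 1| ^ α ∂P) ^ (1 / α) *
        (∫ x, |φ x - ∫ y, φ y ∂P| ^ (α / (α - 1)) ∂P) ^ ((α - 1) / α) := by
  set m := ∫ y, φ y ∂P with hm
  set f := fun x => (Q.rnDeriv P x).toReal with hf
  have hα0 : (0:ℝ) < α := lt_trans zero_lt_one hα
  have hα1 : (0:ℝ) < α - 1 := sub_pos.mpr hα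
  have hconj : Real.HolderConjugate α (α / (α - 1)) :=
    (Real.holderConjugate_iff_eq_conjExponent hα).2 rfl
  have hf_meas : Measurable f := (Measure.measurable_rnDeriv Q P).ennreal_toReal
  -- integrability facts
  have hgQ : Integrable (fun x => φ x - m) Q := hφQ.sub (integrable_const m)
  have hfg : Integrable (fun x => f x * (φ x - m)) P := by
    have := (integrable_rnDeriv_smul_iff hQP).mpr hgQ
    simpa [smul_eq_mul] using this
  have hg : Integrable (fun x => φ x - m) P := hφP.sub (integrable_const m)
  -- key identity
  have hint_gP : ∫ x, (φ x - m) ∂P = 0 := by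
    rw [integral_sub hφP (integrable_const m)]
    simp [hm]
  have hkey : ∫ x, (φ x - m) * (f x - 1) ∂P = (∫ x, φ x ∂Q) - m := by
    have h1 : ∀ x, (φ x - m) * (f x - 1) = f x * (φ x - m) - (φ x - m) := by
      intro x; ring
    rw [show (fun x => (φ x - m) * (f x - 1)) = fun x => f x * (φ x - m) - (φ x - m) by
      funext x; exact h1 x]
    rw [integral_sub hfg hg, hint_gP, sub_zero]
    have h2 : ∫ x, f x * (φ x - m) ∂P = ∫ x, (φ x - m) ∂Q := by
      have := integral_rnDeriv_smul (f := fun x => φ x - m) hQP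
      simpa [smul_eq_mul, hf] using this
    rw [h2, integral_sub hφQ (integrable_const m)]
    simp
  -- Memℒp facts
  have hmemf : MemLp (fun x => f x - 1) (ENNReal.ofReal α) P :=
    memLp_of_integrable_abs_rpow ((hf_meas.sub measurable_const).aestronglyMeasurable) hα0 hdiv
  have hmemg : MemLp (fun x => φ x - m) (ENNReal.ofReal (α / (α - 1))) P :=
    memLp_of_integrable_abs_rpow ((hφ.sub measurable_const).aestronglyMeasurable)
      (div_pos hα0 hα1) hmom
  -- Hölder
  have hholder := MeasureTheory.integral_mul_norm_le_Lp_mul_Lq (μ := P) hconj hmemf hmemg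
  have habs : |∫ x, φ x ∂Q - ∫ x, φ x ∂P| ≤ ∫ x, ‖f x - 1‖ * ‖φ x - m‖ ∂P := by
    rw [← hm, ← hkey]
    calc |∫ x, (φ x - m) * (f x - 1) ∂P| ≤ ∫ x, ‖(φ x - m) * (f x - 1)‖ ∂P := by
          rw [← Real.norm_eq_abs]; exact norm_integral_le_integral_norm _
      _ = ∫ x, ‖f x - 1‖ * ‖φ x - m‖ ∂P := by
          congr 1; funext x; rw [norm_mul]; ring
  refine habs.trans (hholder.trans_eq ?_)
  have h1 : (1 : ℝ) / (α / (α - 1)) = (α - 1) / α := by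
    field_simp
  simp only [Real.norm_eq_abs, h1, hf]
end

section
/- Hammersley–Chapman–Robbins inequality: for probability measures P, Q with Q ≪ P and any measurable φ with 0 < Var_P[φ] < ∞, χ²(Q‖P) ≥ (E_Q[φ] − E_P[φ])² / Var_P[φ]. -/
open MeasureTheory

lemma cs_integral {Ω : Type*} [MeasurableSpace Ω] (μ : Measure Ω) {f h : Ω → ℝ}
    (hf2 : Integrable (fun x => f x ^ 2) μ) (hh2 : Integrable (fun x => h x ^ 2) μ)
    (hfh : Integrable (fun x => f x * h x) μ) :
    (∫ x, f x * h x ∂μ) ^ 2 ≤ (∫ x, f x ^ 2 ∂μ) * ∫ x, h x ^ 2 ∂μ := by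
  set A := ∫ x, f x ^ 2 ∂μ
  set B := ∫ x, f x * h x ∂μ
  set C := ∫ x, h x ^ 2 ∂μ
  have key : ∀ t : ℝ, 0 ≤ A * (t * t) + (2 * B) * t + C := by
    intro t
    have h1 : Integrable (fun x => (t * t) * f x ^ 2) μ := hf2.const_mul _
    have h2 : Integrable (fun x => (2 * t) * (f x * h x)) μ := hfh.const_mul _
    have hint : ∀ x, (t * f x + h x) ^ 2 =
        (t * t) * f x ^ 2 + (2 * t) * (f x * h x) + h x ^ 2 := by intro x; ring
    have : 0 ≤ ∫ x, (t * f x + h x) ^ 2 ∂μ :=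
      integral_nonneg fun x => sq_nonneg _
    have h12 : Integrable (fun x => (t * t) * f x ^ 2 + (2 * t) * (f x * h x)) μ := h1.add h2
    calc (0 : ℝ) ≤ ∫ x, (t * f x + h x) ^ 2 ∂μ := this
      _ = ∫ x, ((t * t) * f x ^ 2 + (2 * t) * (f x * h x) + h x ^ 2) ∂μ := by
          simp_rw [hint]
      _ = (t * t) * A + (2 * t) * B + C := by
          rw [integral_add h12 hh2, integral_add h1 h2,
            integral_const_mul, integral_const_mul]
      _ = A * (t * t) + (2 * B) * t + C := by ring
  have hd := discrim_le_zero key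
  rw [discrim] at hd
  nlinarith [hd]

theorem hcr_inequality
    {Ω : Type*} [MeasurableSpace Ω] (P Q : Measure Ω)
    [IsProbabilityMeasure P] [IsProbabilityMeasure Q] (hQP : Q ≪ P)
    (φ : Ω → ℝ) (hφ : Measurable φ) (hφP : Integrable φ P) (hφQ : Integrable φ Q)
    (hvar : Integrable (fun x => (φ x - ∫ y, φ y ∂P) ^ 2) P)
    (hpos : 0 < ∫ x, (φ x - ∫ y, φ y ∂P) ^ 2 ∂P) :
    ENNReal.ofReal ((∫ x, φ x ∂Q - ∫ x, φ x ∂P) ^ 2 / ∫ x, (φ x - ∫ y, φ y ∂P) ^ 2 ∂P) ≤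
      ∫⁻ x, ENNReal.ofReal (((Q.rnDeriv P x).toReal - 1) ^ 2) ∂P := by
  set g : Ω → ℝ := fun x => (Q.rnDeriv P x).toReal with hg_def
  have hg_meas : Measurable g := (Measure.measurable_rnDeriv Q P).ennreal_toReal
  set m := ∫ y, φ y ∂P with hm_def
  set f : Ω → ℝ := fun x => φ x - m with hf_def
  set h : Ω → ℝ := fun x => g x - 1 with hh_def
  have hh_meas : Measurable h := hg_meas.sub measurable_const
  by_cases hchi : (∫⁻ x, ENNReal.ofReal ((g x - 1) ^ 2) ∂P) = ⊤
  · rw [hchi]; exact le_top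
  -- h² is integrable
  have hh2 : Integrable (fun x => h x ^ 2) P := by
    refine ⟨((hh_meas.pow_const 2).aestronglyMeasurable), ?_⟩
    rw [hasFiniteIntegral_iff_norm]
    have : ∀ x, ENNReal.ofReal ‖h x ^ 2‖ = ENNReal.ofReal ((g x - 1) ^ 2) := by
      intro x; rw [Real.norm_eq_abs, abs_of_nonneg (sq_nonneg _)]
    simp_rw [this]
    exact lt_top_iff_ne_top.mpr hchi
  -- f² is integrable (= hvar)
  have hf2 : Integrable (fun x => f x ^ 2) P := hvar
  -- f*h integrable
  have hfh : Integrable (fun x => f x * h x) P := by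
    refine Integrable.mono' ((hf2.add hh2).div_const 2) ?_ ?_
    · exact ((hφ.sub measurable_const).mul hh_meas).aestronglyMeasurable
    · refine Filter.Eventually.of_forall fun x => ?_
      rw [Real.norm_eq_abs, abs_mul]
      simp only [Pi.add_apply]
      have h1 : |f x| * |h x| ≤ (|f x| ^ 2 + |h x| ^ 2) / 2 := by
        nlinarith [sq_nonneg (|f x| - |h x|)]
      rw [sq_abs, sq_abs] at h1
      linarith
  -- integrability of g and φ*g
  have hgInt : Integrable g P := Measure.integrable_toReal_rnDeriv
  have hφg : Integrable (fun x => g x * φ x) P := by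
    have := (integrable_rnDeriv_smul_iff hQP (f := φ)).mpr hφQ
    simpa [smul_eq_mul] using this
  have hgint1 : ∫ x, g x ∂P = 1 := by
    rw [hg_def]
    simp [Measure.integral_toReal_rnDeriv hQP]
  have hEQ : ∫ x, g x * φ x ∂P = ∫ x, φ x ∂Q := by
    have := integral_rnDeriv_smul hQP (f := φ)
    simpa [smul_eq_mul] using this
  -- key identity: ∫ f h dP = E_Q φ - m
  have hkey : ∫ x, f x * h x ∂P = ∫ x, φ x ∂Q - m := by
    have hexp : ∀ x, f x * h x = g x * φ x - φ x - m * g x + m := by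
      intro x; simp only [hf_def, hh_def]; ring
    have hmg : Integrable (fun x => m * g x) P := hgInt.const_mul m
    have hsub1 : Integrable (fun x => g x * φ x - φ x) P := hφg.sub hφP
    have hsub2 : Integrable (fun x => g x * φ x - φ x - m * g x) P := hsub1.sub hmg
    simp_rw [hexp]
    rw [integral_add hsub2 (integrable_const m),
      integral_sub hsub1 hmg, integral_sub hφg hφP,
      integral_const_mul, hgint1, hEQ]
    simp [hm_def]
  -- Cauchy–Schwarz
  have hcs := cs_integral P hf2 hh2 hfh
  rw [hkey] at hcs
  -- lintegral = ofReal of integral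
  have hC : ∫⁻ x, ENNReal.ofReal ((g x - 1) ^ 2) ∂P = ENNReal.ofReal (∫ x, h x ^ 2 ∂P) := by
    rw [← ofReal_integral_eq_lintegral_ofReal hh2
      (Filter.Eventually.of_forall fun x => sq_nonneg _)]
  rw [hC]
  apply ENNReal.ofReal_le_ofReal
  rw [div_le_iff₀ hpos]
  calc (∫ x, φ x ∂Q - m) ^ 2 ≤ (∫ x, f x ^ 2 ∂P) * ∫ x, h x ^ 2 ∂P := hcs
    _ = (∫ x, h x ^ 2 ∂P) * ∫ x, f x ^ 2 ∂P := mul_comm _ _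
end
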